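/- For b > 0 and any integer k ≥ 2, the improper integral ∫_0^∞ (1/(e^{bx} − 1) − k/(e^{bkx} − 1)) dx converges and equals (ln k)/b. -/

import Mathlib

open Real MeasureTheory Filter

section StmtAux
open Set Topology

lemma aux_pos (c x : ℝ) (hc : 0 < c) (hx : 0 < x) : 1 < Real.exp (c*x) := by
  have hcx : 0 < c * x := mul_pos hc hx
  have := Real.add_one_lt_exp hcx.ne'
  linarith

lemma aux_deriv (c : ℝ) (hc : 0 < c) (x : ℝ) (hx : 0 < x) :
    HasDerivAt (fun y : ℝ => Real.log (1 - Real.exp (-(c*y))) / c)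
      (1/(Real.exp (c*x) - 1)) x := by
  have hE : 1 < Real.exp (c*x) := aux_pos c x hc hx
  have hE0 := Real.exp_pos (c*x)
  have he : Real.exp (-(c*x)) < 1 := by
    rw [Real.exp_lt_one_iff]; nlinarith
  have hne : 1 - Real.exp (-(c*x)) ≠ 0 := by linarith [Real.exp_pos (-(c*x))]
  have h1 : HasDerivAt (fun y : ℝ => -(c*y)) (-c) x := by
    simpa using ((hasDerivAt_id x).const_mul c).fun_neg
  have h2 : HasDerivAt (fun y : ℝ => 1 - Real.exp (-(c*y)))
      (Real.exp (-(c*x)) * c) x := by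
    simpa using ((h1.exp).const_sub 1)
  have h3 := (h2.log hne).div_const c
  refine h3.congr_deriv (Eq.symm ?_)
  rw [div_div, mul_comm (1 - Real.exp (-(c*x))) c, ← div_div,
    mul_div_cancel_right₀ _ hc.ne', Real.exp_neg]
  rw [div_eq_div_iff (by linarith) (by
    rw [Real.exp_neg] at hne; exact hne)]
  field_simp

lemma aux_int (c a : ℝ) (hc : 0 < c) (ha : 0 < a) :
    IntegrableOn (fun x : ℝ => 1/(Real.exp (c*x) - 1)) (Set.Ioi a) ∧
    ∫ x in Set.Ioi a, 1/(Real.exp (c*x) - 1)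
      = -(Real.log (1 - Real.exp (-(c*a))) / c) := by
  have hderiv : ∀ x ∈ Ici a, HasDerivAt (fun y : ℝ => Real.log (1 - Real.exp (-(c*y))) / c)
      (1/(Real.exp (c*x) - 1)) x := fun x hx => aux_deriv c hc x (lt_of_lt_of_le ha hx)
  have hpos : ∀ x ∈ Ioi a, (0:ℝ) ≤ 1/(Real.exp (c*x) - 1) := by
    intro x hx
    have hE : 1 < Real.exp (c*x) := aux_pos c x hc (ha.trans hx)
    have h5 : 0 < Real.exp (c*x) - 1 := by linarith
    positivity
  have htop : Tendsto (fun y : ℝ => Real.log (1 - Real.exp (-(c*y))) / c) atTop (𝓝 0) := by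
    have h1 : Tendsto (fun y : ℝ => -(c*y)) atTop atBot := by
      apply tendsto_neg_atBot_iff.mpr
      exact Tendsto.const_mul_atTop hc tendsto_id
    have h2 : Tendsto (fun y : ℝ => Real.exp (-(c*y))) atTop (𝓝 0) :=
      Real.tendsto_exp_atBot.comp h1
    have h3 : Tendsto (fun y : ℝ => 1 - Real.exp (-(c*y))) atTop (𝓝 1) := by
      simpa using (h2.const_sub 1)
    have h4 := (h3.log one_ne_zero)
    simpa [Real.log_one] using h4.div_const c
  have hint := integrableOn_Ioi_deriv_of_nonneg' hderiv hpos htop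
  refine ⟨hint, ?_⟩
  rw [integral_Ioi_of_hasDerivAt_of_tendsto' hderiv hint htop]
  ring

end StmtAux

open Set Topology in
/-- For `b > 0` and integer `k ≥ 2`, the improper integral
`∫_0^∞ (1/(e^{bx} − 1) − k/(e^{bkx} − 1)) dx` converges (as the limit of integrals
over `(ε, ∞)` as `ε → 0⁺`) and equals `(ln k)/b`. -/
theorem stmt8 (b : ℝ) (hb : 0 < b) (k : ℕ) (hk : 2 ≤ k) :
    (∀ ε : ℝ, 0 < ε →
      IntegrableOn (fun x : ℝ => 1/(Real.exp (b*x) - 1) - (k:ℝ)/(Real.exp (b*(k:ℝ)*x) - 1))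
        (Set.Ioi ε)) ∧
    Tendsto (fun ε : ℝ =>
        ∫ x in Set.Ioi ε, (1/(Real.exp (b*x) - 1) - (k:ℝ)/(Real.exp (b*(k:ℝ)*x) - 1)))
      (nhdsWithin 0 (Set.Ioi 0)) (nhds (Real.log k / b)) := by
  have hkpos : (0:ℝ) < (k:ℝ) := by positivity
  have hc2 : 0 < b * (k:ℝ) := mul_pos hb hkpos
  -- integrability
  have hint : ∀ ε : ℝ, 0 < ε →
      IntegrableOn (fun x : ℝ => 1/(Real.exp (b*x) - 1) - (k:ℝ)/(Real.exp (b*(k:ℝ)*x) - 1))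
        (Set.Ioi ε) := by
    intro ε hε
    have h1 := (aux_int b ε hb hε).1
    have h2 := ((aux_int (b*(k:ℝ)) ε hc2 hε).1.const_mul (k:ℝ))
    have h2' : IntegrableOn (fun x : ℝ => (k:ℝ)/(Real.exp (b*(k:ℝ)*x) - 1)) (Set.Ioi ε) := by
      simpa [mul_one_div, div_eq_mul_inv, IntegrableOn] using h2
    exact h1.sub h2'
  refine ⟨hint, ?_⟩
  -- value of integral for ε > 0
  have hval : ∀ ε : ℝ, 0 < ε →
      (∫ x in Set.Ioi ε, (1/(Real.exp (b*x) - 1) - (k:ℝ)/(Real.exp (b*(k:ℝ)*x) - 1)))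
        = Real.log (∑ i ∈ Finset.range k, Real.exp (-(b*ε))^i) / b := by
    intro ε hε
    have h1 := aux_int b ε hb hε
    have h2 := aux_int (b*(k:ℝ)) ε hc2 hε
    have h2i : IntegrableOn (fun x : ℝ => (k:ℝ)/(Real.exp (b*(k:ℝ)*x) - 1)) (Set.Ioi ε) := by
      simpa [mul_one_div, div_eq_mul_inv, IntegrableOn] using (h2.1.const_mul (k:ℝ))
    rw [integral_sub h1.1 h2i]
    have h2v : (∫ x in Set.Ioi ε, (k:ℝ)/(Real.exp (b*(k:ℝ)*x) - 1))
        = -(Real.log (1 - Real.exp (-(b*(k:ℝ)*ε))) / b) := by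
      have : (∫ x in Set.Ioi ε, (k:ℝ)/(Real.exp (b*(k:ℝ)*x) - 1))
          = (k:ℝ) * ∫ x in Set.Ioi ε, 1/(Real.exp (b*(k:ℝ)*x) - 1) := by
        rw [← MeasureTheory.integral_const_mul]
        congr 1 with x
        rw [mul_one_div]
      rw [this, h2.2]
      field_simp
    rw [h1.2, h2v]
    -- geometric sum identity
    set r := Real.exp (-(b*ε)) with hr
    have hr0 : 0 < r := Real.exp_pos _
    have hr1 : r < 1 := by
      rw [hr, Real.exp_lt_one_iff]; nlinarith
    have hrk : r ^ k = Real.exp (-(b*(k:ℝ)*ε)) := by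
      rw [hr, ← Real.exp_nat_mul]; ring_nf
    have hS : 0 < ∑ i ∈ Finset.range k, r^i := by
      apply Finset.sum_pos (fun i _ => pow_pos hr0 i)
      exact ⟨0, Finset.mem_range.mpr (by omega)⟩
    have hgeom : (1 - r) * (∑ i ∈ Finset.range k, r^i) = 1 - r^k := by
      nlinarith [geom_sum_mul r k]
    have hlog : Real.log (1 - Real.exp (-(b*(k:ℝ)*ε)))
        = Real.log (1 - r) + Real.log (∑ i ∈ Finset.range k, r^i) := by
      rw [← hrk, ← hgeom, Real.log_mul (by linarith) hS.ne']
    rw [hlog]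
    ring
  -- the limit
  have hg : Tendsto (fun ε : ℝ => Real.log (∑ i ∈ Finset.range k, Real.exp (-(b*ε))^i) / b)
      (𝓝 0) (𝓝 (Real.log k / b)) := by
    have hc : Continuous (fun ε : ℝ => ∑ i ∈ Finset.range k, Real.exp (-(b*ε))^i) := by
      apply continuous_finset_sum
      intro i _
      exact ((Real.continuous_exp.comp ((continuous_const.mul continuous_id).neg)).pow i)
    have h0 : (fun ε : ℝ => ∑ i ∈ Finset.range k, Real.exp (-(b*ε))^i) 0 = (k:ℝ) := by
      simp
    have ht : Tendsto (fun ε : ℝ => ∑ i ∈ Finset.range k, Real.exp (-(b*ε))^i)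
        (𝓝 0) (𝓝 (k:ℝ)) := h0 ▸ hc.continuousAt
    exact (ht.log hkpos.ne').div_const b
  refine Tendsto.congr' ?_ (hg.mono_left nhdsWithin_le_nhds)
  filter_upwards [self_mem_nhdsWithin] with ε hε
  exact (hval ε hε).symm
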